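/- In the two-interval price-maker model, in the interior-withholding regime (λ̄_1 > λ̄_2/η² and λ̄_1 − 2α_1 P̄η² < (λ̄_2 + 2α_2 P̄)/η² with α_1, α_2 > 0), the realized prices at the price-maker optimum, λ'_1 = λ̄_1 − α_1 p*_1 and λ'_2 = λ̄_2 + α_2 b*_2 with p*_1 = (λ̄_1 − λ̄_2/η²)/(2(α_1 + α_2/η⁴)) and b*_2 = p*_1/η², still satisfy λ'_1 > λ'_2/η². -/

import Mathlib

/-- in the interior-withholding regime of the two-interval
price-maker model, the realized prices `λ'₁ = λ̄₁ − α₁p₁*` and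
`λ'₂ = λ̄₂ + α₂b₂*` (with `p₁* = (λ̄₁ − λ̄₂/η²)/(2(α₁ + α₂/η⁴))` and
`b₂* = p₁*/η²`) still satisfy `λ'₁ > λ'₂/η²`. -/
theorem maker_realized_prices_exceed_threshold
    (η Pm l1 l2 a1 a2 : ℝ) (hη : 0 < η) (hη1 : η < 1) (hPm : 0 < Pm)
    (hl1 : 0 ≤ l1) (hl2 : 0 ≤ l2) (ha1 : 0 < a1) (ha2 : 0 < a2)
    (hspread : l1 > l2 / η ^ 2)
    (hmr : l1 - 2 * a1 * Pm * η ^ 2 < (l2 + 2 * a2 * Pm) / η ^ 2) :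
    let p1 := (l1 - l2 / η ^ 2) / (2 * (a1 + a2 / η ^ 4))
    let b2 := p1 / η ^ 2
    l1 - a1 * p1 > (l2 + a2 * b2) / η ^ 2 := by
  intro p1 b2
  have hη2 : (0:ℝ) < η ^ 2 := by positivity
  have hη4 : (0:ℝ) < η ^ 4 := by positivity
  have hD : (0:ℝ) < a1 + a2 / η ^ 4 := by positivity
  have hS : 0 < l1 - l2 / η ^ 2 := sub_pos.mpr hspread
  have hkey : (l1 - a1 * p1) - (l2 + a2 * b2) / η ^ 2
      = (l1 - l2 / η ^ 2) - (a1 + a2 / η ^ 4) * p1 := by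
    show (l1 - a1 * p1) - (l2 + a2 * (p1 / η ^ 2)) / η ^ 2 = _
    field_simp
    ring
  have hp1 : (a1 + a2 / η ^ 4) * p1 = (l1 - l2 / η ^ 2) / 2 := by
    show (a1 + a2 / η ^ 4) * ((l1 - l2 / η ^ 2) / (2 * (a1 + a2 / η ^ 4))) = _
    field_simp
  have : (l1 - a1 * p1) - (l2 + a2 * b2) / η ^ 2 = (l1 - l2 / η ^ 2) / 2 := by
    rw [hkey, hp1]; ring
  linarith [this]
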